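/- Let $(X'_n)_{n\ge 0}$ be a process on $\mathbb{Z}$ with $X'_0=0$ and bounded increments $|X'_{n+1}-X'_n| \le C_0$, and suppose there exist random times $0 = \tau_0 < \tau_1 < \tau_2 < \cdots$ and a constant $a \ge 1$ such that: the random variables $(X'_{\tau_{k+1}} - X'_{\tau_k}, \tau_{k+1}-\tau_k)_{k \ge 0}$ are i.i.d., $(X'_{\tau_k})_k$ is a martingale, $\mathbb{E}[\tau_1^2] < \infty$, and $\mathbb{E}[\tau_1] = a$. Then $\sup_{n \ge 1} \frac{1}{n} \mathbb{E}[\max_{0 \le i \le n} |X'_i|^2] < \infty$. -/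

import Mathlib

open MeasureTheory ProbabilityTheory

section Aux

private lemma int_mul {Ω : Type*} [MeasurableSpace Ω] {P : Measure Ω} {f g : Ω → ℝ}
    (hf : AEStronglyMeasurable f P) (hg : AEStronglyMeasurable g P)
    (hf2 : Integrable (fun ω => f ω ^ 2) P) (hg2 : Integrable (fun ω => g ω ^ 2) P) :
    Integrable (fun ω => f ω * g ω) P := by
  refine Integrable.mono' (((hf2.add hg2)).const_mul (1/2)) (hf.mul hg)
    (Filter.Eventually.of_forall fun ω => ?_)
  simp only [Pi.add_apply]
  rw [Real.norm_eq_abs, abs_le]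
  constructor <;> nlinarith [sq_nonneg (f ω - g ω), sq_nonneg (f ω + g ω)]

private lemma sup'_range_succ_eq (a : ℕ → ℝ) (n : ℕ) :
    (Finset.range (n + 1 + 1)).sup' Finset.nonempty_range_add_one a
      = max ((Finset.range (n + 1)).sup' Finset.nonempty_range_add_one a) (a (n + 1)) := by
  apply le_antisymm
  · apply Finset.sup'_le
    intro k hk
    rw [Finset.mem_range] at hk
    rcases Nat.lt_succ_iff_lt_or_eq.mp hk with h | h
    · exact le_max_of_le_left (Finset.le_sup' a (Finset.mem_range.mpr h))
    · subst h; exact le_max_right _ _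
  · apply max_le
    · apply Finset.sup'_le
      intro k hk
      rw [Finset.mem_range] at hk
      exact Finset.le_sup' a (Finset.mem_range.mpr (by omega))
    · exact Finset.le_sup' a (Finset.mem_range.mpr (by omega))

private lemma abel_bound (a : ℕ → ℝ) (ha : ∀ k, 0 ≤ a k) (n : ℕ) :
    ∑ k ∈ Finset.range n,
        ((Finset.range (k + 1)).sup' Finset.nonempty_range_add_one a) * (a (k + 1) - a k)
      ≤ ((Finset.range (n + 1)).sup' Finset.nonempty_range_add_one a) * a n
        - ((Finset.range (n + 1)).sup' Finset.nonempty_range_add_one a) ^ 2 / 2 - (a 0) ^ 2 / 2 := by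
  induction n with
  | zero => simp [Finset.range_one]; nlinarith [ha 0]
  | succ n ih =>
      rw [Finset.sum_range_succ, sup'_range_succ_eq]
      set m := (Finset.range (n + 1)).sup' Finset.nonempty_range_add_one a with hm
      have ham : a (n + 1) ≤ max m (a (n + 1)) := le_max_right _ _
      have h2 : m ≤ max m (a (n + 1)) := le_max_left _ _
      rcases max_cases m (a (n + 1)) with ⟨h, hle⟩ | ⟨h, hlt⟩
      · rw [h]; nlinarith [ih]
      · rw [h]; nlinarith [ih, sq_nonneg (a (n + 1) - m)]

private lemma pathwise_doob (a : ℕ → ℝ) (ha : ∀ k, 0 ≤ a k) (n : ℕ) :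
    ((Finset.range (n + 1)).sup' Finset.nonempty_range_add_one a) ^ 2
      ≤ 4 * (a n) ^ 2
        - 4 * ∑ k ∈ Finset.range n,
            ((Finset.range (k + 1)).sup' Finset.nonempty_range_add_one a) * (a (k + 1) - a k) := by
  have h := abel_bound a ha n
  have h1 : a n ≤ (Finset.range (n + 1)).sup' Finset.nonempty_range_add_one a :=
    Finset.le_sup' a (by simp)
  nlinarith [sq_nonneg (2 * a n - (Finset.range (n + 1)).sup' Finset.nonempty_range_add_one a),
    sq_nonneg (a 0)]

private lemma var_sum {Ω : Type*} [m : MeasurableSpace Ω] {P : Measure Ω}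
    [IsProbabilityMeasure P] {ξ : ℕ → Ω → ℝ}
    (hmeas : ∀ k, Measurable (ξ k))
    (hindep : iIndepFun ξ P)
    (hint : ∀ k, Integrable (ξ k) P)
    (hsq : ∀ k, Integrable (fun ω => ξ k ω ^ 2) P)
    (hmean : ∀ k, ∫ ω, ξ k ω ∂P = 0)
    (hvar : ∀ k, ∫ ω, ξ k ω ^ 2 ∂P = ∫ ω, ξ 0 ω ^ 2 ∂P) (n : ℕ) :
    Integrable (fun ω => (∑ j ∈ Finset.range n, ξ j ω) ^ 2) P ∧
      ∫ ω, (∑ j ∈ Finset.range n, ξ j ω) ^ 2 ∂P = n * ∫ ω, ξ 0 ω ^ 2 ∂P := by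
  induction n with
  | zero => simp
  | succ n ih =>
      obtain ⟨ihint, iheq⟩ := ih
      have hSmeas : Measurable (fun ω => ∑ j ∈ Finset.range n, ξ j ω) := by
        apply Finset.measurable_sum
        exact fun j _ => hmeas j
      have hSint : Integrable (fun ω => ∑ j ∈ Finset.range n, ξ j ω) P := by
        apply integrable_finset_sum
        exact fun j _ => hint j
      have hmul : Integrable (fun ω => (∑ j ∈ Finset.range n, ξ j ω) * ξ n ω) P :=
        int_mul hSmeas.aestronglyMeasurable (hmeas n).aestronglyMeasurable ihint (hsq n)
      have hsum_eq : (∑ j ∈ Finset.range n, ξ j) = fun ω => ∑ j ∈ Finset.range n, ξ j ω := by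
        funext ω; simp [Finset.sum_apply]
      have hindepSn : IndepFun (∑ j ∈ Finset.range n, ξ j) (ξ n) P :=
        hindep.indepFun_finsetSum_of_notMem hmeas Finset.notMem_range_self
      have hmulint : ∫ ω, (∑ j ∈ Finset.range n, ξ j ω) * ξ n ω ∂P = 0 := by
        have h3 : ∫ ω, (∑ j ∈ Finset.range n, ξ j ω) * ξ n ω ∂P
            = (∫ ω, (∑ j ∈ Finset.range n, ξ j ω) ∂P) * ∫ ω, ξ n ω ∂P := by
          have h := hindepSn.integral_mul_eq_mul_integral (by rw [hsum_eq]; exact hSint.aestronglyMeasurable) (hint n).aestronglyMeasurable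
          rw [hsum_eq] at h
          exact h
        rw [h3, hmean n, mul_zero]
      have hexp : ∀ ω, (∑ j ∈ Finset.range (n + 1), ξ j ω) ^ 2
          = (∑ j ∈ Finset.range n, ξ j ω) ^ 2
            + (2 * ((∑ j ∈ Finset.range n, ξ j ω) * ξ n ω) + ξ n ω ^ 2) := by
        intro ω; rw [Finset.sum_range_succ]; ring
      constructor
      · rw [show (fun ω => (∑ j ∈ Finset.range (n + 1), ξ j ω) ^ 2)
            = fun ω => (∑ j ∈ Finset.range n, ξ j ω) ^ 2
              + (2 * ((∑ j ∈ Finset.range n, ξ j ω) * ξ n ω) + ξ n ω ^ 2) from funext hexp]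
        exact ihint.add ((hmul.const_mul 2).add (hsq n))
      · rw [show (fun ω => (∑ j ∈ Finset.range (n + 1), ξ j ω) ^ 2)
            = fun ω => (∑ j ∈ Finset.range n, ξ j ω) ^ 2
              + (2 * ((∑ j ∈ Finset.range n, ξ j ω) * ξ n ω) + ξ n ω ^ 2) from funext hexp]
        have hB : Integrable (fun ω => 2 * ((∑ j ∈ Finset.range n, ξ j ω) * ξ n ω)
            + ξ n ω ^ 2) P := (hmul.const_mul 2).add (hsq n)
        have hC : Integrable (fun ω => 2 * ((∑ j ∈ Finset.range n, ξ j ω) * ξ n ω)) P :=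
          hmul.const_mul 2
        rw [integral_add ihint hB, integral_add hC (hsq n), integral_const_mul, hmulint, iheq,
          hvar n]
        push_cast
        ring

private lemma doobL2 {Ω : Type*} [m : MeasurableSpace Ω] {P : Measure Ω} [IsProbabilityMeasure P]
    {G : Filtration ℕ m} {M : ℕ → Ω → ℝ} (hmart : Martingale M G P)
    (hMsq : ∀ k, Integrable (fun ω => M k ω ^ 2) P) (n : ℕ) :
    Integrable (fun ω => ((Finset.range (n + 1)).sup' Finset.nonempty_range_add_one
        (fun j => |M j ω|)) ^ 2) P ∧
    ∫ ω, ((Finset.range (n + 1)).sup' Finset.nonempty_range_add_one (fun j => |M j ω|)) ^ 2 ∂P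
      ≤ 4 * ∫ ω, M n ω ^ 2 ∂P := by
  have hMmeas : ∀ k, Measurable (M k) :=
    fun k => (hmart.stronglyMeasurable k).measurable.le (G.le k)
  have hbmeas : ∀ k, Measurable (fun ω =>
      (Finset.range (k + 1)).sup' Finset.nonempty_range_add_one (fun j => |M j ω|)) :=
    fun k => Finset.measurable_range_sup'' (fun j _ => (hMmeas j).abs)
  have hbnn : ∀ k ω, 0 ≤ (Finset.range (k + 1)).sup' Finset.nonempty_range_add_one
      (fun j => |M j ω|) :=
    fun k ω => le_trans (abs_nonneg (M 0 ω))
      (Finset.le_sup' (f := fun j => |M j ω|) (Finset.mem_range.mpr (Nat.succ_pos k)))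
  have hbsq_int : ∀ k, Integrable (fun ω => ((Finset.range (k + 1)).sup'
      Finset.nonempty_range_add_one (fun j => |M j ω|)) ^ 2) P := by
    intro k
    refine Integrable.mono' (integrable_finset_sum (Finset.range (k + 1)) (fun j _ => hMsq j))
      (((hbmeas k).pow_const 2)).aestronglyMeasurable (Filter.Eventually.of_forall fun ω => ?_)
    obtain ⟨j, hj, hje⟩ := Finset.exists_mem_eq_sup'
      (Finset.nonempty_range_add_one (n := k)) (fun j => |M j ω|)
    rw [Real.norm_eq_abs, abs_of_nonneg (sq_nonneg _), hje, sq_abs]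
    exact Finset.single_le_sum (f := fun j => M j ω ^ 2) (fun i _ => sq_nonneg _) hj
  have hasq_int : ∀ k, Integrable (fun ω => |M k ω| ^ 2) P :=
    fun k => (hMsq k).congr (Filter.Eventually.of_forall fun ω => (sq_abs (M k ω)).symm)
  have habs_int : ∀ k, Integrable (fun ω => |M k ω|) P := fun k => (hmart.integrable k).abs
  have hprod : ∀ k l, Integrable (fun ω => ((Finset.range (k + 1)).sup'
      Finset.nonempty_range_add_one (fun j => |M j ω|)) * |M l ω|) P :=
    fun k l => int_mul (hbmeas k).aestronglyMeasurable ((hMmeas l).abs).aestronglyMeasurable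
      (hbsq_int k) (hasq_int l)
  have hterm_int : ∀ k, Integrable (fun ω => ((Finset.range (k + 1)).sup'
      Finset.nonempty_range_add_one (fun j => |M j ω|)) * (|M (k + 1) ω| - |M k ω|)) P :=
    fun k => ((hprod k (k + 1)).sub (hprod k k)).congr
      (Filter.Eventually.of_forall fun ω => by simp only [Pi.sub_apply]; ring)
  have hkey : ∀ k, 0 ≤ ∫ ω, ((Finset.range (k + 1)).sup' Finset.nonempty_range_add_one
      (fun j => |M j ω|)) * (|M (k + 1) ω| - |M k ω|) ∂P := by
    intro k
    have hcond : (fun ω => |M k ω|) ≤ᵐ[P] P[(fun ω => |M (k + 1) ω|)|G k] := by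
      have h1 : P[M (k + 1)|G k] ≤ᵐ[P] P[(fun ω => |M (k + 1) ω|)|G k] :=
        condExp_mono (hmart.integrable (k + 1)) (habs_int (k + 1))
          (Filter.Eventually.of_forall fun ω => le_abs_self _)
      have h2 : P[-(M (k + 1))|G k] ≤ᵐ[P] P[(fun ω => |M (k + 1) ω|)|G k] :=
        condExp_mono ((hmart.integrable (k + 1)).neg) (habs_int (k + 1))
          (Filter.Eventually.of_forall fun ω => neg_le_abs _)
      have h3 : P[-(M (k + 1))|G k] =ᵐ[P] -P[M (k + 1)|G k] := condExp_neg (M (k + 1)) (G k)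
      have h4 : P[M (k + 1)|G k] =ᵐ[P] M k := hmart.condExp_ae_eq (Nat.le_succ k)
      filter_upwards [h1, h2, h3, h4] with ω e1 e2 e3 e4
      simp only [Pi.neg_apply] at e3
      rw [abs_le]
      constructor <;> linarith
    have hbsm' : Measurable[G k] (fun ω => (Finset.range (k + 1)).sup'
        Finset.nonempty_range_add_one (fun j => |M j ω|)) := by
      letI : MeasurableSpace Ω := G k
      exact Finset.measurable_range_sup''
        (fun j hj => ((hmart.stronglyMeasurable j).mono (G.mono hj)).measurable.abs)
    have hbsm : StronglyMeasurable[G k] (fun ω => (Finset.range (k + 1)).sup'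
        Finset.nonempty_range_add_one (fun j => |M j ω|)) := hbsm'.stronglyMeasurable
    have hpull : P[(fun ω => ((Finset.range (k + 1)).sup' Finset.nonempty_range_add_one
          (fun j => |M j ω|)) * |M (k + 1) ω|)|G k]
        =ᵐ[P] fun ω => ((Finset.range (k + 1)).sup' Finset.nonempty_range_add_one
          (fun j => |M j ω|)) * (P[(fun ω => |M (k + 1) ω|)|G k]) ω :=
      condExp_mul_of_stronglyMeasurable_left hbsm (hprod k (k + 1)) (habs_int (k + 1))
    have hInt2 : Integrable (fun ω => ((Finset.range (k + 1)).sup'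
        Finset.nonempty_range_add_one (fun j => |M j ω|))
          * (P[(fun ω => |M (k + 1) ω|)|G k]) ω) P :=
      integrable_condExp.congr hpull
    have hstep1 : ∫ ω, ((Finset.range (k + 1)).sup' Finset.nonempty_range_add_one
          (fun j => |M j ω|)) * |M k ω| ∂P
        ≤ ∫ ω, ((Finset.range (k + 1)).sup' Finset.nonempty_range_add_one
          (fun j => |M j ω|)) * (P[(fun ω => |M (k + 1) ω|)|G k]) ω ∂P := by
      refine integral_mono_ae (hprod k k) hInt2 ?_
      filter_upwards [hcond] with ω h
      exact mul_le_mul_of_nonneg_left h (hbnn k ω)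
    have hstep2 : ∫ ω, ((Finset.range (k + 1)).sup' Finset.nonempty_range_add_one
          (fun j => |M j ω|)) * (P[(fun ω => |M (k + 1) ω|)|G k]) ω ∂P
        = ∫ ω, ((Finset.range (k + 1)).sup' Finset.nonempty_range_add_one
          (fun j => |M j ω|)) * |M (k + 1) ω| ∂P := by
      rw [← integral_congr_ae hpull]
      exact integral_condExp (G.le k)
    have hsplit : ∫ ω, ((Finset.range (k + 1)).sup' Finset.nonempty_range_add_one
          (fun j => |M j ω|)) * (|M (k + 1) ω| - |M k ω|) ∂P
        = (∫ ω, ((Finset.range (k + 1)).sup' Finset.nonempty_range_add_one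
            (fun j => |M j ω|)) * |M (k + 1) ω| ∂P)
          - ∫ ω, ((Finset.range (k + 1)).sup' Finset.nonempty_range_add_one
            (fun j => |M j ω|)) * |M k ω| ∂P := by
      rw [← integral_sub (hprod k (k + 1)) (hprod k k)]
      exact integral_congr_ae (Filter.Eventually.of_forall fun ω => by
        simp only [Pi.sub_apply]; ring)
    rw [hsplit]
    linarith
  refine ⟨hbsq_int n, ?_⟩
  have hptwise : ∀ ω, ((Finset.range (n + 1)).sup' Finset.nonempty_range_add_one
        (fun j => |M j ω|)) ^ 2
      ≤ 4 * M n ω ^ 2 - 4 * ∑ k ∈ Finset.range n,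
          ((Finset.range (k + 1)).sup' Finset.nonempty_range_add_one (fun j => |M j ω|))
            * (|M (k + 1) ω| - |M k ω|) := by
    intro ω
    have h := pathwise_doob (fun j => |M j ω|) (fun j => abs_nonneg _) n
    simp only [sq_abs] at h
    exact h
  have hsum_int : Integrable (fun ω => ∑ k ∈ Finset.range n,
      ((Finset.range (k + 1)).sup' Finset.nonempty_range_add_one (fun j => |M j ω|))
        * (|M (k + 1) ω| - |M k ω|)) P :=
    integrable_finset_sum _ (fun k _ => hterm_int k)
  have hrhs_int : Integrable (fun ω => 4 * M n ω ^ 2 - 4 * ∑ k ∈ Finset.range n,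
      ((Finset.range (k + 1)).sup' Finset.nonempty_range_add_one (fun j => |M j ω|))
        * (|M (k + 1) ω| - |M k ω|)) P :=
    ((hMsq n).const_mul 4).sub (hsum_int.const_mul 4)
  have hmono := integral_mono (hbsq_int n) hrhs_int hptwise
  have hsplit2 : ∫ ω, (4 * M n ω ^ 2 - 4 * ∑ k ∈ Finset.range n,
        ((Finset.range (k + 1)).sup' Finset.nonempty_range_add_one (fun j => |M j ω|))
          * (|M (k + 1) ω| - |M k ω|)) ∂P
      = 4 * (∫ ω, M n ω ^ 2 ∂P) - 4 * ∑ k ∈ Finset.range n,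
          ∫ ω, ((Finset.range (k + 1)).sup' Finset.nonempty_range_add_one (fun j => |M j ω|))
            * (|M (k + 1) ω| - |M k ω|) ∂P := by
    rw [integral_sub ((hMsq n).const_mul 4) (hsum_int.const_mul 4), integral_const_mul,
      integral_const_mul, integral_finset_sum _ (fun k _ => hterm_int k)]
  rw [hsplit2] at hmono
  have hsum_nonneg : 0 ≤ ∑ k ∈ Finset.range n,
      ∫ ω, ((Finset.range (k + 1)).sup' Finset.nonempty_range_add_one (fun j => |M j ω|))
        * (|M (k + 1) ω| - |M k ω|) ∂P :=
    Finset.sum_nonneg (fun k _ => hkey k)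
  linarith

end Aux

set_option maxHeartbeats 1000000 in
/-- For a process `X` with `X_0 = 0` and increments bounded by `C₀`,
admitting renewal times `τ_k` with i.i.d. increments `(X_{τ_{k+1}} - X_{τ_k}, τ_{k+1} - τ_k)`,
such that `(X_{τ_k})` is a martingale, `E[τ_1²] < ∞` and `E[τ_1] = a ≥ 1`, one has
`sup_{n ≥ 1} (1/n) E[max_{0 ≤ i ≤ n} |X_i|²] < ∞`. -/
theorem stmt6 {Ω : Type*} [m : MeasurableSpace Ω] (P : Measure Ω) [IsProbabilityMeasure P]
    (X : ℕ → Ω → ℝ) (C0 : ℝ)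
    (hmeasX : ∀ n, Measurable (X n))
    (hX0 : ∀ ω, X 0 ω = 0)
    (hinc : ∀ n ω, |X (n + 1) ω - X n ω| ≤ C0)
    (τ : ℕ → Ω → ℕ) (hmeasτ : ∀ k, Measurable (τ k))
    (hτ0 : ∀ ω, τ 0 ω = 0)
    (hτmono : ∀ k ω, τ k ω < τ (k + 1) ω)
    (a : ℝ) (ha : 1 ≤ a)
    (hindep : iIndepFun
      (fun k ω => (X (τ (k + 1) ω) ω - X (τ k ω) ω, ((τ (k + 1) ω : ℝ) - τ k ω))) P)
    (hident : ∀ k, IdentDistrib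
      (fun ω => (X (τ (k + 1) ω) ω - X (τ k ω) ω, ((τ (k + 1) ω : ℝ) - τ k ω)))
      (fun ω => (X (τ 1 ω) ω - X (τ 0 ω) ω, ((τ 1 ω : ℝ) - τ 0 ω))) P P)
    (G : Filtration ℕ m)
    (hmart : Martingale (fun k ω => X (τ k ω) ω) G P)
    (hτ2 : Integrable (fun ω => ((τ 1 ω : ℝ)) ^ 2) P)
    (hτmean : ∫ ω, (τ 1 ω : ℝ) ∂P = a) :
    ∃ K : ℝ, ∀ n : ℕ, 1 ≤ n →
      ∫ ω, ((Finset.range (n + 1)).sup' Finset.nonempty_range_add_one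
        (fun i => |X i ω| ^ 2)) ∂P ≤ K * n := by
  classical
  obtain ⟨ω₀⟩ : Nonempty Ω := by
    by_contra h
    rw [not_nonempty_iff] at h
    have h1 : P Set.univ = 1 := measure_univ
    rw [Set.univ_eq_empty_iff.mpr h, measure_empty] at h1
    exact zero_ne_one h1
  have hC0 : 0 ≤ C0 := le_trans (abs_nonneg _) (hinc 0 ω₀)
  set T : ℝ := ∫ ω, ((τ 1 ω : ℝ)) ^ 2 ∂P with hTdef
  have hT0 : 0 ≤ T := integral_nonneg fun ω => sq_nonneg _
  have hXdiff : ∀ (ω : Ω) (j i : ℕ), j ≤ i → |X i ω - X j ω| ≤ C0 * ((i : ℝ) - j) := by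
    intro ω j i hji
    induction i, hji using Nat.le_induction with
    | base => simp
    | succ i hji ih =>
        calc |X (i + 1) ω - X j ω|
            ≤ |X (i + 1) ω - X i ω| + |X i ω - X j ω| := abs_sub_le _ _ _
          _ ≤ C0 + C0 * ((i : ℝ) - j) := add_le_add (hinc i ω) ih
          _ = C0 * (((i + 1 : ℕ) : ℝ) - j) := by push_cast; ring
  have hMmeas : ∀ k, Measurable (fun ω => X (τ k ω) ω) :=
    fun k => (hmart.stronglyMeasurable k).measurable.le (G.le k)
  have hMint : ∀ k, Integrable (fun ω => X (τ k ω) ω) P := fun k => hmart.integrable k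
  have hM0 : ∀ ω, X (τ 0 ω) ω = 0 := fun ω => by rw [hτ0 ω]; exact hX0 ω
  have hτge : ∀ k ω, k ≤ τ k ω := by
    intro k ω
    induction k with
    | zero => exact Nat.zero_le _
    | succ k ih => have := hτmono k ω; omega
  have hDmeas : ∀ k, Measurable (fun ω => ((τ (k + 1) ω : ℝ) - τ k ω)) := by
    intro k
    have h1 : Measurable (fun ω => ((τ (k + 1) ω : ℕ) : ℝ)) :=
      measurable_from_top.comp (hmeasτ (k + 1))
    have h2 : Measurable (fun ω => ((τ k ω : ℕ) : ℝ)) :=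
      measurable_from_top.comp (hmeasτ k)
    exact h1.sub h2
  have hDnn : ∀ k ω, (0 : ℝ) ≤ (τ (k + 1) ω : ℝ) - τ k ω := by
    intro k ω
    have : (τ k ω : ℝ) ≤ τ (k + 1) ω := by exact_mod_cast (hτmono k ω).le
    linarith
  have hidD : ∀ k, IdentDistrib (fun ω => ((τ (k + 1) ω : ℝ) - τ k ω))
      (fun ω => ((τ 1 ω : ℝ))) P P := by
    intro k
    have he : (fun ω => ((τ 1 ω : ℝ) - τ 0 ω)) = fun ω => ((τ 1 ω : ℝ)) := by
      funext ω; rw [hτ0 ω]; simp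
    rw [← he]
    exact (hident k).comp measurable_snd
  have hidDsq : ∀ k, IdentDistrib (fun ω => ((τ (k + 1) ω : ℝ) - τ k ω) ^ 2)
      (fun ω => ((τ 1 ω : ℝ)) ^ 2) P P :=
    fun k => (hidD k).comp (measurable_id.pow_const 2)
  have hDsq_int : ∀ k, Integrable (fun ω => ((τ (k + 1) ω : ℝ) - τ k ω) ^ 2) P :=
    fun k => (hidDsq k).integrable_iff.mpr hτ2
  have hDsq_eq : ∀ k, ∫ ω, ((τ (k + 1) ω : ℝ) - τ k ω) ^ 2 ∂P = T :=
    fun k => (hidDsq k).integral_eq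
  have hξmeas : ∀ k, Measurable (fun ω => X (τ (k + 1) ω) ω - X (τ k ω) ω) :=
    fun k => (hMmeas (k + 1)).sub (hMmeas k)
  have hξint : ∀ k, Integrable (fun ω => X (τ (k + 1) ω) ω - X (τ k ω) ω) P :=
    fun k => (hMint (k + 1)).sub (hMint k)
  have hξleD : ∀ k ω, |X (τ (k + 1) ω) ω - X (τ k ω) ω|
      ≤ C0 * ((τ (k + 1) ω : ℝ) - τ k ω) :=
    fun k ω => hXdiff ω (τ k ω) (τ (k + 1) ω) (hτmono k ω).le
  have hξ0sq_int : Integrable (fun ω => (X (τ 1 ω) ω - X (τ 0 ω) ω) ^ 2) P := by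
    refine Integrable.mono' ((hDsq_int 0).const_mul (C0 ^ 2))
      ((hξmeas 0).pow_const 2).aestronglyMeasurable (Filter.Eventually.of_forall fun ω => ?_)
    have h1 := hξleD 0 ω
    have h2 := hDnn 0 ω
    rw [Real.norm_eq_abs, abs_of_nonneg (sq_nonneg _)]
    nlinarith [abs_nonneg (X (τ 1 ω) ω - X (τ 0 ω) ω), sq_abs (X (τ 1 ω) ω - X (τ 0 ω) ω)]
  have hidξ : ∀ k, IdentDistrib (fun ω => X (τ (k + 1) ω) ω - X (τ k ω) ω)
      (fun ω => X (τ 1 ω) ω - X (τ 0 ω) ω) P P := fun k => (hident k).comp measurable_fst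
  have hidξsq : ∀ k, IdentDistrib (fun ω => (X (τ (k + 1) ω) ω - X (τ k ω) ω) ^ 2)
      (fun ω => (X (τ 1 ω) ω - X (τ 0 ω) ω) ^ 2) P P :=
    fun k => (hidξ k).comp (measurable_id.pow_const 2)
  have hξsq_int : ∀ k, Integrable (fun ω => (X (τ (k + 1) ω) ω - X (τ k ω) ω) ^ 2) P :=
    fun k => (hidξsq k).integrable_iff.mpr hξ0sq_int
  have hξsq_eq : ∀ k, ∫ ω, (X (τ (k + 1) ω) ω - X (τ k ω) ω) ^ 2 ∂P
      = ∫ ω, (X (τ 1 ω) ω - X (τ 0 ω) ω) ^ 2 ∂P := fun k => (hidξsq k).integral_eq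
  have hvar0 : ∫ ω, (X (τ 1 ω) ω - X (τ 0 ω) ω) ^ 2 ∂P ≤ C0 ^ 2 * T := by
    have hle : ∀ ω, (X (τ 1 ω) ω - X (τ 0 ω) ω) ^ 2
        ≤ C0 ^ 2 * ((τ 1 ω : ℝ) - τ 0 ω) ^ 2 := by
      intro ω
      have h1 := hξleD 0 ω
      have h2 := hDnn 0 ω
      nlinarith [abs_nonneg (X (τ 1 ω) ω - X (τ 0 ω) ω), sq_abs (X (τ 1 ω) ω - X (τ 0 ω) ω)]
    calc ∫ ω, (X (τ 1 ω) ω - X (τ 0 ω) ω) ^ 2 ∂P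
        ≤ ∫ ω, C0 ^ 2 * ((τ 1 ω : ℝ) - τ 0 ω) ^ 2 ∂P :=
          integral_mono hξ0sq_int ((hDsq_int 0).const_mul _) hle
      _ = C0 ^ 2 * ∫ ω, ((τ 1 ω : ℝ) - τ 0 ω) ^ 2 ∂P := integral_const_mul _ _
      _ = C0 ^ 2 * T := by rw [hDsq_eq 0]
  have hmean : ∀ k, ∫ ω, (X (τ (k + 1) ω) ω - X (τ k ω) ω) ∂P = 0 := by
    have h0 : ∫ ω, (X (τ 1 ω) ω - X (τ 0 ω) ω) ∂P = 0 := by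
      rw [integral_sub (hMint 1) (hMint 0)]
      have e1 : ∫ ω, X (τ 0 ω) ω ∂P = 0 := by simp [hM0]
      have e2 : ∫ ω, X (τ 1 ω) ω ∂P = ∫ ω, X (τ 0 ω) ω ∂P := by
        rw [← integral_condExp (G.le 0) (f := fun ω => X (τ 1 ω) ω)]
        exact integral_congr_ae (hmart.condExp_ae_eq (Nat.zero_le 1))
      rw [e2, e1, sub_zero]
    intro k
    rw [(hidξ k).integral_eq]
    exact h0
  have hiid : iIndepFun
      (fun k ω => X (τ (k + 1) ω) ω - X (τ k ω) ω) P :=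
    hindep.comp (fun _ => Prod.fst) (fun _ => measurable_fst)
  have hMn_eq : ∀ (k : ℕ) (ω : Ω),
      (∑ j ∈ Finset.range k, (X (τ (j + 1) ω) ω - X (τ j ω) ω)) = X (τ k ω) ω := by
    intro k ω
    rw [Finset.sum_range_sub (f := fun j => X (τ j ω) ω), hM0 ω, sub_zero]
  have hMsq_int : ∀ k, Integrable (fun ω => (X (τ k ω) ω) ^ 2) P := by
    intro k
    obtain ⟨hint', _⟩ := var_sum hξmeas hiid hξint hξsq_int hmean hξsq_eq k
    exact hint'.congr (Filter.Eventually.of_forall fun ω => by simp only [hMn_eq k ω])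
  refine ⟨12 * C0 ^ 2 * T, fun n hn => ?_⟩
  obtain ⟨_, hSnsq_eq⟩ := var_sum hξmeas hiid hξint hξsq_int hmean hξsq_eq n
  simp only [zero_add] at hSnsq_eq
  have hMnsq_eq : ∫ ω, (X (τ n ω) ω) ^ 2 ∂P
      = n * ∫ ω, (X (τ 1 ω) ω - X (τ 0 ω) ω) ^ 2 ∂P := by
    rw [← hSnsq_eq]
    exact integral_congr_ae (Filter.Eventually.of_forall fun ω => by simp only [hMn_eq n ω])
  obtain ⟨hbint, hdoob⟩ := doobL2 hmart hMsq_int n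
  -- the max of the squared interarrival times
  have hDmax_meas : Measurable (fun ω => (Finset.range (n + 1)).sup'
      Finset.nonempty_range_add_one (fun k => ((τ (k + 1) ω : ℝ) - τ k ω) ^ 2)) :=
    Finset.measurable_range_sup'' (fun k _ => (hDmeas k).pow_const 2)
  have hDmax_int : Integrable (fun ω => (Finset.range (n + 1)).sup'
      Finset.nonempty_range_add_one (fun k => ((τ (k + 1) ω : ℝ) - τ k ω) ^ 2)) P := by
    refine Integrable.mono' (integrable_finset_sum (Finset.range (n + 1))
        (fun k _ => hDsq_int k)) hDmax_meas.aestronglyMeasurable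
      (Filter.Eventually.of_forall fun ω => ?_)
    obtain ⟨j, hj, hje⟩ := Finset.exists_mem_eq_sup'
      (Finset.nonempty_range_add_one (n := n)) (fun k => ((τ (k + 1) ω : ℝ) - τ k ω) ^ 2)
    rw [Real.norm_eq_abs, hje, abs_of_nonneg (sq_nonneg _)]
    exact Finset.single_le_sum (f := fun k => ((τ (k + 1) ω : ℝ) - τ k ω) ^ 2)
      (fun i _ => sq_nonneg _) hj
  have hDmax_le : ∫ ω, (Finset.range (n + 1)).sup' Finset.nonempty_range_add_one
      (fun k => ((τ (k + 1) ω : ℝ) - τ k ω) ^ 2) ∂P ≤ (n + 1) * T := by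
    calc ∫ ω, (Finset.range (n + 1)).sup' Finset.nonempty_range_add_one
          (fun k => ((τ (k + 1) ω : ℝ) - τ k ω) ^ 2) ∂P
        ≤ ∫ ω, ∑ k ∈ Finset.range (n + 1), ((τ (k + 1) ω : ℝ) - τ k ω) ^ 2 ∂P := by
          refine integral_mono hDmax_int (integrable_finset_sum _ (fun k _ => hDsq_int k))
            (fun ω => ?_)
          apply Finset.sup'_le
          intro k hk
          exact Finset.single_le_sum (f := fun k => ((τ (k + 1) ω : ℝ) - τ k ω) ^ 2)
            (fun i _ => sq_nonneg _) hk
      _ = ∑ k ∈ Finset.range (n + 1), ∫ ω, ((τ (k + 1) ω : ℝ) - τ k ω) ^ 2 ∂P :=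
          integral_finset_sum _ (fun k _ => hDsq_int k)
      _ = (n + 1) * T := by
          rw [Finset.sum_congr rfl (fun k _ => hDsq_eq k), Finset.sum_const,
            Finset.card_range, nsmul_eq_mul]
          push_cast
          ring
  -- pointwise bound for the running maximum of |X|²
  have hbnn : ∀ ω, 0 ≤ (Finset.range (n + 1)).sup' Finset.nonempty_range_add_one
      (fun j => |X (τ j ω) ω|) :=
    fun ω => le_trans (abs_nonneg (X (τ 0 ω) ω))
      (Finset.le_sup' (f := fun j => |X (τ j ω) ω|) (Finset.mem_range.mpr (Nat.succ_pos n)))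
  have hYptw : ∀ ω, (Finset.range (n + 1)).sup' Finset.nonempty_range_add_one
        (fun i => |X i ω| ^ 2)
      ≤ 2 * ((Finset.range (n + 1)).sup' Finset.nonempty_range_add_one
          (fun j => |X (τ j ω) ω|)) ^ 2
        + 2 * C0 ^ 2 * (Finset.range (n + 1)).sup' Finset.nonempty_range_add_one
          (fun k => ((τ (k + 1) ω : ℝ) - τ k ω) ^ 2) := by
    intro ω
    apply Finset.sup'_le
    intro i hi
    rw [Finset.mem_range, Nat.lt_succ_iff] at hi
    have hsne : ((Finset.range (i + 1)).filter (fun k => τ k ω ≤ i)).Nonempty := by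
      refine ⟨0, Finset.mem_filter.mpr ⟨Finset.mem_range.mpr (Nat.succ_pos i), ?_⟩⟩
      rw [hτ0 ω]; exact Nat.zero_le _
    set k := ((Finset.range (i + 1)).filter (fun k => τ k ω ≤ i)).max' hsne with hkdef
    have hks := Finset.max'_mem _ hsne
    rw [Finset.mem_filter, Finset.mem_range] at hks
    have hk1 : k ≤ i := by omega
    have hk2 : τ k ω ≤ i := hks.2
    have hk3 : i < τ (k + 1) ω := by
      by_contra hcon
      push_neg at hcon
      have hmem : k + 1 ∈ (Finset.range (i + 1)).filter (fun k => τ k ω ≤ i) := by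
        refine Finset.mem_filter.mpr ⟨Finset.mem_range.mpr ?_, hcon⟩
        have := hτge (k + 1) ω; omega
      have := Finset.le_max' _ (k + 1) hmem
      omega
    have h6 : |X i ω - X (τ k ω) ω| ≤ C0 * ((i : ℝ) - τ k ω) := hXdiff ω (τ k ω) i hk2
    have h7 : C0 * ((i : ℝ) - τ k ω) ≤ C0 * ((τ (k + 1) ω : ℝ) - τ k ω) := by
      apply mul_le_mul_of_nonneg_left _ hC0
      have : (i : ℝ) ≤ (τ (k + 1) ω : ℝ) := by exact_mod_cast hk3.le
      linarith
    have h8 : |X (τ k ω) ω| ≤ (Finset.range (n + 1)).sup' Finset.nonempty_range_add_one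
        (fun j => |X (τ j ω) ω|) :=
      Finset.le_sup' (f := fun j => |X (τ j ω) ω|) (Finset.mem_range.mpr (by omega))
    have h5 : |X i ω| ≤ C0 * ((τ (k + 1) ω : ℝ) - τ k ω)
        + (Finset.range (n + 1)).sup' Finset.nonempty_range_add_one
          (fun j => |X (τ j ω) ω|) := by
      calc |X i ω| = |(X i ω - X (τ k ω) ω) + X (τ k ω) ω| := by ring_nf
        _ ≤ |X i ω - X (τ k ω) ω| + |X (τ k ω) ω| := abs_add_le _ _
        _ ≤ C0 * ((τ (k + 1) ω : ℝ) - τ k ω)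
            + (Finset.range (n + 1)).sup' Finset.nonempty_range_add_one
              (fun j => |X (τ j ω) ω|) := add_le_add (h6.trans h7) h8
    have hDk : ((τ (k + 1) ω : ℝ) - τ k ω) ^ 2 ≤ (Finset.range (n + 1)).sup'
        Finset.nonempty_range_add_one (fun k => ((τ (k + 1) ω : ℝ) - τ k ω) ^ 2) :=
      Finset.le_sup' (f := fun k => ((τ (k + 1) ω : ℝ) - τ k ω) ^ 2)
        (Finset.mem_range.mpr (by omega))
    have h9 : C0 ^ 2 * ((τ (k + 1) ω : ℝ) - τ k ω) ^ 2
        ≤ C0 ^ 2 * (Finset.range (n + 1)).sup' Finset.nonempty_range_add_one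
          (fun k => ((τ (k + 1) ω : ℝ) - τ k ω) ^ 2) :=
      mul_le_mul_of_nonneg_left hDk (sq_nonneg C0)
    have h10 := hbnn ω
    have h11 := hDnn k ω
    have h12 := abs_nonneg (X i ω)
    have h13 := sq_abs (X i ω)
    nlinarith [sq_nonneg (C0 * ((τ (k + 1) ω : ℝ) - τ k ω)
      - (Finset.range (n + 1)).sup' Finset.nonempty_range_add_one (fun j => |X (τ j ω) ω|)),
      mul_nonneg hC0 h11]
  have hYmeas : Measurable (fun ω => (Finset.range (n + 1)).sup'
      Finset.nonempty_range_add_one (fun i => |X i ω| ^ 2)) :=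
    Finset.measurable_range_sup'' (fun i _ => ((hmeasX i).abs).pow_const 2)
  have hY_int : Integrable (fun ω => (Finset.range (n + 1)).sup'
      Finset.nonempty_range_add_one (fun i => |X i ω| ^ 2)) P := by
    refine Integrable.mono' (integrable_const ((C0 * n) ^ 2)) hYmeas.aestronglyMeasurable
      (Filter.Eventually.of_forall fun ω => ?_)
    rw [Real.norm_eq_abs]
    have h0 : (0 : ℝ) ≤ (Finset.range (n + 1)).sup' Finset.nonempty_range_add_one
        (fun i => |X i ω| ^ 2) :=
      le_trans (sq_nonneg _) (Finset.le_sup' (f := fun i => |X i ω| ^ 2)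
        (Finset.mem_range.mpr (Nat.succ_pos n)))
    rw [abs_of_nonneg h0]
    apply Finset.sup'_le
    intro i hi
    rw [Finset.mem_range, Nat.lt_succ_iff] at hi
    have h1 : |X i ω| ≤ C0 * i := by
      have := hXdiff ω 0 i (Nat.zero_le i)
      rw [hX0 ω, sub_zero] at this
      simpa using this
    have h2 : C0 * (i : ℝ) ≤ C0 * n := by
      apply mul_le_mul_of_nonneg_left _ hC0
      exact_mod_cast hi
    nlinarith [abs_nonneg (X i ω), sq_abs (X i ω)]
  have hRHS1 : Integrable (fun ω => 2 * ((Finset.range (n + 1)).sup'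
      Finset.nonempty_range_add_one (fun j => |X (τ j ω) ω|)) ^ 2) P := hbint.const_mul 2
  have hRHS2 : Integrable (fun ω => 2 * C0 ^ 2 * (Finset.range (n + 1)).sup'
      Finset.nonempty_range_add_one (fun k => ((τ (k + 1) ω : ℝ) - τ k ω) ^ 2)) P :=
    hDmax_int.const_mul (2 * C0 ^ 2)
  have hRHSsum : Integrable (fun ω => 2 * ((Finset.range (n + 1)).sup'
      Finset.nonempty_range_add_one (fun j => |X (τ j ω) ω|)) ^ 2
        + 2 * C0 ^ 2 * (Finset.range (n + 1)).sup' Finset.nonempty_range_add_one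
          (fun k => ((τ (k + 1) ω : ℝ) - τ k ω) ^ 2)) P := hRHS1.add hRHS2
  have hfinal := integral_mono hY_int hRHSsum hYptw
  rw [integral_add hRHS1 hRHS2, integral_const_mul, integral_const_mul] at hfinal
  have h1 : ∫ ω, ((Finset.range (n + 1)).sup' Finset.nonempty_range_add_one
      (fun j => |X (τ j ω) ω|)) ^ 2 ∂P ≤ 4 * ((n : ℝ) * (C0 ^ 2 * T)) := by
    calc ∫ ω, ((Finset.range (n + 1)).sup' Finset.nonempty_range_add_one
          (fun j => |X (τ j ω) ω|)) ^ 2 ∂P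
        ≤ 4 * ∫ ω, (X (τ n ω) ω) ^ 2 ∂P := hdoob
      _ = 4 * ((n : ℝ) * ∫ ω, (X (τ 1 ω) ω - X (τ 0 ω) ω) ^ 2 ∂P) := by rw [hMnsq_eq]
      _ ≤ 4 * ((n : ℝ) * (C0 ^ 2 * T)) := by
          have hn0 : (0 : ℝ) ≤ n := Nat.cast_nonneg n
          nlinarith [hvar0]
  have h2 : ∫ ω, (Finset.range (n + 1)).sup' Finset.nonempty_range_add_one
      (fun k => ((τ (k + 1) ω : ℝ) - τ k ω) ^ 2) ∂P ≤ 2 * (n : ℝ) * T := by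
    have hn' : ((n : ℝ) + 1) ≤ 2 * n := by
      have : (1 : ℝ) ≤ n := by exact_mod_cast hn
      linarith
    calc ∫ ω, (Finset.range (n + 1)).sup' Finset.nonempty_range_add_one
          (fun k => ((τ (k + 1) ω : ℝ) - τ k ω) ^ 2) ∂P
        ≤ ((n : ℝ) + 1) * T := hDmax_le
      _ ≤ 2 * (n : ℝ) * T := mul_le_mul_of_nonneg_right hn' hT0
  calc ∫ ω, (Finset.range (n + 1)).sup' Finset.nonempty_range_add_one
        (fun i => |X i ω| ^ 2) ∂P
      ≤ 2 * ∫ ω, ((Finset.range (n + 1)).sup' Finset.nonempty_range_add_one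
          (fun j => |X (τ j ω) ω|)) ^ 2 ∂P
        + 2 * C0 ^ 2 * ∫ ω, (Finset.range (n + 1)).sup' Finset.nonempty_range_add_one
          (fun k => ((τ (k + 1) ω : ℝ) - τ k ω) ^ 2) ∂P := hfinal
    _ ≤ 2 * (4 * ((n : ℝ) * (C0 ^ 2 * T))) + 2 * C0 ^ 2 * (2 * (n : ℝ) * T) := by
        refine add_le_add (by linarith [h1]) (mul_le_mul_of_nonneg_left h2 (by positivity))
    _ = 12 * C0 ^ 2 * T * n := by ring
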